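/- Let M be a valuated matroid on finite set E with values in ℝ ∪ {∞} and w ∈ ℝ^E. Every circuit of the initial matroid in_w(M) is of the form in_w(H) for some valuated circuit H of M, where in_w(H) = { e : H_e + w_e minimal }. -/

import Mathlib

/-- A valuated matroid of rank `r` on a finite ground set `E`, with values in `ℝ ∪ {∞}`:
a basis valuation function `p` on `binom(E,r)` (encoded as a function on all finsets which
is `∞` away from `r`-sets), not identically `∞`, satisfying the valuated basis exchange
axiom. -/
structure ValuatedMatroid (E : Type*) [DecidableEq E] [Fintype E] (r : ℕ) where
  p : Finset E → WithTop ℝ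
  card_of_ne_top : ∀ B : Finset E, p B ≠ ⊤ → B.card = r
  exists_ne_top : ∃ B : Finset E, p B ≠ ⊤
  exchange : ∀ A B : Finset E, A.card = r → B.card = r → ∀ a ∈ A \ B,
    ∃ b ∈ B \ A,
      p (insert b (A.erase a)) + p (insert a (B.erase b)) ≤ p A + p B

namespace ValuatedMatroid

variable {E : Type*} [DecidableEq E] [Fintype E] {r : ℕ}

/-- The shifted valuation `p_w(B) = p(B) − ∑_{e ∈ B} w_e`. -/
noncomputable def pw (M : ValuatedMatroid E r) (w : E → ℝ) (B : Finset E) : WithTop ℝ :=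
  M.p B + ((-(∑ e ∈ B, w e) : ℝ) : WithTop ℝ)

/-- The minimum of `p_w` over all subsets of `E` (equivalently over all `r`-subsets,
since `p` is `∞` elsewhere). -/
noncomputable def minVal (M : ValuatedMatroid E r) (w : E → ℝ) : WithTop ℝ :=
  (Finset.univ : Finset E).powerset.inf (M.pw w)

/-- `B` is a basis of the initial matroid `in_w(M)`: an `r`-subset minimizing `p_w`. -/
def IsInitBasis (M : ValuatedMatroid E r) (w : E → ℝ) (B : Finset E) : Prop :=
  B.card = r ∧ M.pw w B = M.minVal w

end ValuatedMatroid

namespace ValuatedMatroid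

variable {E : Type*} [DecidableEq E] [Fintype E] {r : ℕ}

/-- The fundamental circuit `H(B, e)` of `e` over a basis `B` of the underlying matroid:
`H(B,e)_{e'} = p(B ∪ e − e') − p(B)`. -/
noncomputable def fundCircuit (M : ValuatedMatroid E r) (B : Finset E) (e : E) :
    E → WithTop ℝ := fun e' =>
  M.p ((insert e B).erase e') + ((-(WithTop.untopD 0 (M.p B)) : ℝ) : WithTop ℝ)

/-- A valuated circuit of `M`: a tropical scaling `λ ⊙ H(B, e)` of a fundamental
circuit over a basis `B` of the underlying matroid (`p(B) ≠ ∞`). -/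
noncomputable def IsValuatedCircuit (M : ValuatedMatroid E r) (H : E → WithTop ℝ) : Prop :=
  ∃ (B : Finset E) (e : E) (lam : ℝ), M.p B ≠ ⊤ ∧ e ∉ B ∧
    ∀ e', H e' = (lam : WithTop ℝ) + M.fundCircuit B e e'

/-- `in_w(H)`: the set of elements at which `H_e + w_e` is minimal. -/
def initSet (H : E → WithTop ℝ) (w : E → ℝ) : Set E :=
  {e | ∀ e', H e + (w e : WithTop ℝ) ≤ H e' + (w e' : WithTop ℝ)}

end ValuatedMatroid

namespace ValuatedMatroid

variable {E : Type*} [DecidableEq E] [Fintype E] {r : ℕ}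

lemma minVal_le (M : ValuatedMatroid E r) (w : E → ℝ) (B : Finset E) :
    M.minVal w ≤ M.pw w B :=
  Finset.inf_le (Finset.mem_powerset.2 (Finset.subset_univ B))

lemma pw_ne_top {M : ValuatedMatroid E r} {w : E → ℝ} {B : Finset E} (h : M.p B ≠ ⊤) :
    M.pw w B ≠ ⊤ := by
  simp only [pw, Ne, WithTop.add_eq_top, not_or]
  exact ⟨h, WithTop.coe_ne_top⟩

lemma p_ne_top_of_pw {M : ValuatedMatroid E r} {w : E → ℝ} {B : Finset E}
    (h : M.pw w B ≠ ⊤) : M.p B ≠ ⊤ := by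
  intro hp
  exact h (by simp [pw, hp])

lemma minVal_ne_top (M : ValuatedMatroid E r) (w : E → ℝ) : M.minVal w ≠ ⊤ := by
  obtain ⟨B, hB⟩ := M.exists_ne_top
  exact ne_top_of_le_ne_top (pw_ne_top hB) (M.minVal_le w B)

lemma IsInitBasis.p_ne_top {M : ValuatedMatroid E r} {w : E → ℝ} {B : Finset E}
    (h : M.IsInitBasis w B) : M.p B ≠ ⊤ :=
  p_ne_top_of_pw (h.2 ▸ M.minVal_ne_top w)

lemma isInitBasis_of_pw_le {M : ValuatedMatroid E r} {w : E → ℝ} {B : Finset E}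
    (h : M.pw w B ≤ M.minVal w) : M.IsInitBasis w B := by
  have heq : M.pw w B = M.minVal w := le_antisymm h (M.minVal_le w B)
  exact ⟨M.card_of_ne_top B (p_ne_top_of_pw (heq ▸ M.minVal_ne_top w)), heq⟩

lemma exists_isInitBasis (M : ValuatedMatroid E r) (w : E → ℝ) :
    ∃ B : Finset E, M.IsInitBasis w B := by
  obtain ⟨B, _, hB⟩ := Finset.exists_mem_eq_inf (Finset.univ : Finset E).powerset
    ⟨∅, Finset.mem_powerset.2 (Finset.empty_subset _)⟩ (M.pw w)
  exact ⟨B, isInitBasis_of_pw_le hB.ge⟩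

/-- Basis exchange for initial bases. -/
lemma initBasis_exchange {M : ValuatedMatroid E r} {w : E → ℝ} {A B : Finset E}
    (hA : M.IsInitBasis w A) (hB : M.IsInitBasis w B) {a : E} (haA : a ∈ A) (haB : a ∉ B) :
    ∃ b ∈ B, b ∉ A ∧ M.IsInitBasis w (insert b (A.erase a)) ∧
      M.IsInitBasis w (insert a (B.erase b)) := by
  obtain ⟨b, hb, hle⟩ := M.exchange A B hA.1 hB.1 a (Finset.mem_sdiff.2 ⟨haA, haB⟩)
  obtain ⟨hbB, hbA⟩ := Finset.mem_sdiff.1 hb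
  set A' := insert b (A.erase a) with hA'
  set B' := insert a (B.erase b) with hB'
  have hsumA' : ∑ x ∈ A', w x = w b + ∑ x ∈ A.erase a, w x :=
    Finset.sum_insert (by simp [Finset.mem_erase, hbA])
  have hsumB' : ∑ x ∈ B', w x = w a + ∑ x ∈ B.erase b, w x :=
    Finset.sum_insert (by simp [Finset.mem_erase, haB])
  have hsA := Finset.sum_erase_add A w haA
  have hsB := Finset.sum_erase_add B w hbB
  have hconst : (-(∑ x ∈ A', w x) : ℝ) + (-(∑ x ∈ B', w x)) =
      (-(∑ x ∈ A, w x)) + (-(∑ x ∈ B, w x)) := by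
    rw [hsumA', hsumB']; linarith
  have hpw2 : M.pw w A' + M.pw w B' ≤ M.minVal w + M.minVal w := by
    have h1 : M.pw w A' + M.pw w B' =
        (M.p A' + M.p B') + (((-(∑ x ∈ A', w x)) + (-(∑ x ∈ B', w x)) : ℝ) : WithTop ℝ) := by
      simp only [pw, WithTop.coe_add]
      abel
    have h2 : M.pw w A + M.pw w B =
        (M.p A + M.p B) + (((-(∑ x ∈ A, w x)) + (-(∑ x ∈ B, w x)) : ℝ) : WithTop ℝ) := by
      simp only [pw, WithTop.coe_add]
      abel
    calc M.pw w A' + M.pw w B'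
        = (M.p A' + M.p B') + (((-(∑ x ∈ A, w x)) + (-(∑ x ∈ B, w x)) : ℝ) : WithTop ℝ) := by
          rw [h1, hconst]
      _ ≤ (M.p A + M.p B) + (((-(∑ x ∈ A, w x)) + (-(∑ x ∈ B, w x)) : ℝ) : WithTop ℝ) :=
          add_le_add_left hle _
      _ = M.pw w A + M.pw w B := h2.symm
      _ = M.minVal w + M.minVal w := by rw [hA.2, hB.2]
  have hmt := M.minVal_ne_top w
  have hA'le : M.pw w A' ≤ M.minVal w := by
    have : M.pw w A' + M.minVal w ≤ M.minVal w + M.minVal w :=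
      le_trans (add_le_add_right (M.minVal_le w B') _) hpw2
    exact (WithTop.add_le_add_iff_right hmt).1 this
  have hB'le : M.pw w B' ≤ M.minVal w := by
    have : M.minVal w + M.pw w B' ≤ M.minVal w + M.minVal w :=
      le_trans (add_le_add_left (M.minVal_le w A') _) hpw2
    exact (WithTop.add_le_add_iff_left hmt).1 this
  exact ⟨b, hbB, hbA, isInitBasis_of_pw_le hA'le, isInitBasis_of_pw_le hB'le⟩

end ValuatedMatroid


open ValuatedMatroid

/-- **Circuits of the initial matroid are initial sets of valuated circuits.**  Every
circuit `C` of the initial matroid `in_w(M)` (a minimal set contained in no basis of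
`in_w(M)`) has the form `C = in_w(H) = argmin_e (H_e + w_e)` for some valuated circuit
`H` of `M`. -/
theorem circuit_initMatroid_eq_initSet {E : Type*} [DecidableEq E] [Fintype E] {r : ℕ}
    (M : ValuatedMatroid E r) (w : E → ℝ) (C : Finset E)
    (hdep : ¬ ∃ B : Finset E, M.IsInitBasis w B ∧ C ⊆ B)
    (hmin : ∀ C' : Finset E, C' ⊆ C → C' ≠ C → ∃ B : Finset E, M.IsInitBasis w B ∧ C' ⊆ B) :
    ∃ H : E → WithTop ℝ, M.IsValuatedCircuit H ∧ (C : Set E) = initSet H w := by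
  classical
  have hCne : C.Nonempty := by
    rcases Finset.eq_empty_or_nonempty C with h | h
    · obtain ⟨B0, hB0⟩ := M.exists_isInitBasis w
      exact absurd ⟨B0, hB0, h ▸ Finset.empty_subset _⟩ hdep
    · exact h
  obtain ⟨e, heC⟩ := hCne
  obtain ⟨B, hB, hCB⟩ := hmin (C.erase e) (Finset.erase_subset _ _)
    (Finset.erase_ssubset heC).ne
  have heB : e ∉ B := by
    intro heB
    refine hdep ⟨B, hB, fun c hc => ?_⟩
    rcases eq_or_ne c e with rfl | hne
    · exact heB
    · exact hCB (Finset.mem_erase.2 ⟨hne, hc⟩)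
  have hpB : M.p B ≠ ⊤ := hB.p_ne_top
  obtain ⟨pB, hpBeq⟩ := WithTop.ne_top_iff_exists.1 hpB
  have hcard1 : (insert e B).card = r + 1 := by
    rw [Finset.card_insert_of_notMem heB, hB.1]
  set c0 : ℝ := (∑ x ∈ B, w x) + w e - pB with hc0
  set H : E → WithTop ℝ := M.fundCircuit B e with hH
  have huntop : WithTop.untopD 0 (M.p B) = pB := by rw [← hpBeq, WithTop.untopD_coe]
  have key : ∀ x ∈ insert e B,
      H x + ((w x : ℝ) : WithTop ℝ)
        = M.pw w ((insert e B).erase x) + ((c0 : ℝ) : WithTop ℝ) := by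
    intro x hx
    have hsum : ∑ y ∈ (insert e B).erase x, w y = (∑ x ∈ B, w x) + w e - w x := by
      have h1 := Finset.sum_erase_add (insert e B) w hx
      rw [Finset.sum_insert heB] at h1
      linarith
    simp only [hH, fundCircuit, pw, huntop, hsum, hc0]
    rw [add_assoc, add_assoc, ← WithTop.coe_add, ← WithTop.coe_add]
    congr 1
    rw [WithTop.coe_eq_coe]
    ring
  have hmemtop : ∀ x, x ∉ insert e B → H x + ((w x : ℝ) : WithTop ℝ) = ⊤ := by
    intro x hx
    have hset : (insert e B).erase x = insert e B := Finset.erase_eq_of_notMem hx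
    have hp : M.p ((insert e B).erase x) = ⊤ := by
      by_contra hne
      have hc := M.card_of_ne_top _ hne
      rw [hset, hcard1] at hc
      omega
    simp [hH, fundCircuit, hp]
  have hEe : (insert e B).erase e = B := Finset.erase_insert heB
  have hHe : H e + ((w e : ℝ) : WithTop ℝ) = M.minVal w + ((c0 : ℝ) : WithTop ℝ) := by
    rw [key e (Finset.mem_insert_self e B), hEe, hB.2]
  have crux : ∀ x ∈ C, M.IsInitBasis w ((insert e B).erase x) := by
    intro x hxC
    rcases eq_or_ne x e with rfl | hxe
    · rw [hEe]; exact hB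
    · have hxB : x ∈ B := hCB (Finset.mem_erase.2 ⟨hxe, hxC⟩)
      obtain ⟨B', hB', hCB'⟩ := hmin (C.erase x) (Finset.erase_subset _ _)
        (Finset.erase_ssubset hxC).ne
      have hxB' : x ∉ B' := by
        intro hxB'
        refine hdep ⟨B', hB', fun c hc => ?_⟩
        rcases eq_or_ne c x with rfl | hne
        · exact hxB'
        · exact hCB' (Finset.mem_erase.2 ⟨hne, hc⟩)
      obtain ⟨b, hbB', hbB, hinit1, hinit2⟩ := initBasis_exchange hB hB' hxB hxB'
      have hbC : b ∈ C := by
        by_contra hbC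
        refine hdep ⟨insert x (B'.erase b), hinit2, fun c hc => ?_⟩
        rcases eq_or_ne c x with rfl | hne
        · exact Finset.mem_insert_self _ _
        · exact Finset.mem_insert_of_mem (Finset.mem_erase.2
            ⟨fun h => hbC (h ▸ hc), hCB' (Finset.mem_erase.2 ⟨hne, hc⟩)⟩)
      have hbe : b = e := by
        by_contra hbe
        exact hbB (hCB (Finset.mem_erase.2 ⟨hbe, hbC⟩))
      rw [hbe] at hinit1
      have hset : (insert e B).erase x = insert e (B.erase x) := by
        ext y
        simp only [Finset.mem_erase, Finset.mem_insert]
        constructor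
        · rintro ⟨hyx, hy | hy⟩
          · exact Or.inl hy
          · exact Or.inr ⟨hyx, hy⟩
        · rintro (rfl | ⟨hyx, hy⟩)
          · exact ⟨fun h => hxe h.symm, Or.inl rfl⟩
          · exact ⟨hyx, Or.inr hy⟩
      rw [hset]
      exact hinit1
  refine ⟨H, ⟨B, e, 0, hpB, heB, fun e' => by simp [hH]⟩, ?_⟩
  ext x
  simp only [Finset.coe_sort_coe, Finset.mem_coe, initSet, Set.mem_setOf_eq]
  constructor
  · intro hxC y
    have hxmem : x ∈ insert e B := by
      rcases eq_or_ne x e with rfl | hxe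
      · exact Finset.mem_insert_self _ _
      · exact Finset.mem_insert_of_mem (hCB (Finset.mem_erase.2 ⟨hxe, hxC⟩))
    rw [key x hxmem, (crux x hxC).2]
    rcases em (y ∈ insert e B) with hy | hy
    · rw [key y hy]
      exact add_le_add_left (M.minVal_le w _) _
    · rw [hmemtop y hy]; exact le_top
  · intro hx
    by_contra hxC
    have hne : H x + ((w x : ℝ) : WithTop ℝ) ≠ ⊤ := by
      intro h
      have h1 := hx e
      rw [hHe, h, top_le_iff] at h1
      exact WithTop.add_ne_top.2 ⟨M.minVal_ne_top w, WithTop.coe_ne_top⟩ h1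
    have hxmem : x ∈ insert e B := by
      by_contra hmem
      exact hne (hmemtop x hmem)
    have hle : M.pw w ((insert e B).erase x) ≤ M.minVal w := by
      have h1 := hx e
      rw [hHe, key x hxmem] at h1
      exact (WithTop.add_le_add_iff_right WithTop.coe_ne_top).1 h1
    refine hdep ⟨(insert e B).erase x, isInitBasis_of_pw_le hle, fun c hc => ?_⟩
    refine Finset.mem_erase.2 ⟨fun h => hxC (h ▸ hc), ?_⟩
    rcases eq_or_ne c e with rfl | hne'
    · exact Finset.mem_insert_self _ _
    · exact Finset.mem_insert_of_mem (hCB (Finset.mem_erase.2 ⟨hne', hc⟩))
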